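/- For all integers d ≥ 1 and q ≥ 1 and every family of points x : Fin ((d+1)*(q-1)+1) → ℝ^d, there exist q pairwise disjoint nonempty subsets A_1, …, A_q of Fin ((d+1)*(q-1)+1) whose union is all of Fin ((d+1)*(q-1)+1), such that the intersection ⋂_{i=1}^q convexHull ℝ (x '' A_i) is nonempty. -/

import Mathlib

open scoped BigOperators

open Finset Module

noncomputable section

/-- Extract convex combination weights over a fintype index. -/
lemma tv_exists_weights {ι : Type*} [Fintype ι] {E : Type*} [AddCommGroup E] [Module ℝ E]
    {v : ι → E} {p : E} (hp : p ∈ convexHull ℝ (Set.range v)) :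
    ∃ w : ι → ℝ, (∀ i, 0 ≤ w i) ∧ ∑ i, w i = 1 ∧ ∑ i, w i • v i = p := by
  classical
  rw [convexHull_range_eq_exists_affineCombination] at hp
  obtain ⟨s, w, h0, h1, h2⟩ := hp
  refine ⟨fun i => if i ∈ s then w i else 0, fun i => ?_, ?_, ?_⟩
  · dsimp only; split
    · exact h0 _ ‹_›
    · exact le_refl 0
  · rw [Finset.sum_ite_mem, Finset.univ_inter, h1]
  · rw [Finset.affineCombination_eq_linear_combination s v w h1] at h2
    rw [← h2]
    rw [Finset.sum_congr rfl (g := fun i => if i ∈ s then w i • v i else 0)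
      (fun i _ => by dsimp only; split <;> simp)]
    rw [Finset.sum_ite_mem, Finset.univ_inter]


lemma tv_shrink {E : Type*} [NormedAddCommGroup E] [InnerProductSpace ℝ E]
    [FiniteDimensional ℝ E] {ι : Type*} [Fintype ι] [DecidableEq ι] {p : E} (hp : p ≠ 0)
    (t : ι → E) (ht : ∀ i, ‖p‖ ^ 2 ≤ inner ℝ p (t i)) :
    ∀ (n : ℕ) (w : ι → ℝ), (Finset.univ.filter (fun i => w i ≠ 0)).card = n →
      (∀ i, 0 ≤ w i) → ∑ i, w i = 1 → ∑ i, w i • t i = p →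
      ∃ w' : ι → ℝ, (∀ i, 0 ≤ w' i) ∧ ∑ i, w' i = 1 ∧ ∑ i, w' i • t i = p ∧
        (Finset.univ.filter (fun i => w' i ≠ 0)).card ≤ finrank ℝ E := by
  intro n
  induction n using Nat.strong_induction_on with
  | _ n IH =>
  intro w hcard hw0 hw1 hw2
  by_cases hle : (Finset.univ.filter (fun i => w i ≠ 0)).card ≤ finrank ℝ E
  · exact ⟨w, hw0, hw1, hw2, hle⟩
  push_neg at hle
  set S : Finset ι := Finset.univ.filter (fun i => w i ≠ 0) with hSdef
  have hmemS : ∀ i, i ∈ S ↔ w i ≠ 0 := by intro i; simp [hSdef]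
  have hzero : ∀ i ∉ S, w i = 0 := by
    intro i hi; by_contra h; exact hi ((hmemS i).2 h)
  have hsum1 : ∑ i ∈ S, w i = 1 := by
    rw [← hw1]
    exact Finset.sum_subset (Finset.subset_univ S) (fun i _ hi => hzero i hi)
  have hsum2 : ∑ i ∈ S, w i • t i = p := by
    rw [← hw2]
    exact Finset.sum_subset (Finset.subset_univ S) (fun i _ hi => by rw [hzero i hi, zero_smul])
  -- equality of inner products on the support
  have heq : ∀ i ∈ S, (inner ℝ p (t i) : ℝ) = ‖p‖ ^ 2 := by
    have hzero' : ∑ i, w i * ((inner ℝ p (t i) : ℝ) - ‖p‖ ^ 2) = 0 := by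
      have h1 : ∑ i, w i * (inner ℝ p (t i) : ℝ) = ‖p‖ ^ 2 := by
        have : (inner ℝ p (∑ i, w i • t i) : ℝ) = ‖p‖ ^ 2 := by
          rw [hw2, real_inner_self_eq_norm_sq]
        rw [inner_sum] at this
        simpa [real_inner_smul_right] using this
      simp only [mul_sub, Finset.sum_sub_distrib, h1, ← Finset.sum_mul, hw1, one_mul, sub_self]
    have hterm : ∀ i ∈ Finset.univ (α := ι), 0 ≤ w i * ((inner ℝ p (t i) : ℝ) - ‖p‖ ^ 2) :=
      fun i _ => mul_nonneg (hw0 i) (by linarith [ht i])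
    intro i hi
    have := (Finset.sum_eq_zero_iff_of_nonneg hterm).1 hzero' i (Finset.mem_univ i)
    rcases mul_eq_zero.1 this with h | h
    · exact absurd h ((hmemS i).1 hi)
    · linarith
  -- the linear map into the orthogonal complement of p
  let Φ : ({i // i ∈ S} → ℝ) →ₗ[ℝ] E :=
    { toFun := fun c => ∑ i, c i • (t i.1 - p)
      map_add' := fun c c' => by simp [add_smul, Finset.sum_add_distrib]
      map_smul' := fun r c => by simp [mul_smul, Finset.smul_sum] }
  have hΦ : ∀ c, Φ c = ∑ i, c i • (t i.1 - p) := fun c => rfl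
  have hrange : ∀ c, (inner ℝ p (Φ c) : ℝ) = 0 := by
    intro c
    have hterm : ∀ i : {i // i ∈ S}, (inner ℝ p (c i • (t i.1 - p)) : ℝ) = 0 := by
      intro i
      rw [real_inner_smul_right, inner_sub_right, heq i.1 i.2, real_inner_self_eq_norm_sq]
      ring
    rw [hΦ, inner_sum]
    simp [hterm]
  let Φ' : ({i // i ∈ S} → ℝ) →ₗ[ℝ] (Submodule.span ℝ ({p} : Set E))ᗮ :=
    Φ.codRestrict (Submodule.span ℝ ({p} : Set E))ᗮ
      (fun c => Submodule.mem_orthogonal_singleton_iff_inner_right.2 (hrange c))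
  have hkerΦ' : ∀ c, c ∈ LinearMap.ker Φ' ↔ Φ c = 0 := by
    intro c
    rw [LinearMap.mem_ker]
    constructor
    · intro h; have := congrArg (Subtype.val) h; simpa [Φ'] using this
    · intro h; ext; simpa [Φ'] using h
  -- dimension count
  have hdim : 2 ≤ finrank ℝ (LinearMap.ker Φ') := by
    have hW : finrank ℝ ((Submodule.span ℝ ({p} : Set E))ᗮ) + 1 = finrank ℝ E := by
      have := Submodule.finrank_add_finrank_orthogonal (Submodule.span ℝ ({p} : Set E))
      rw [finrank_span_singleton hp] at this
      omega
    have hdom : finrank ℝ ({i // i ∈ S} → ℝ) = S.card := by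
      rw [finrank_fintype_fun_eq_card, Fintype.card_coe]
    have hrn := LinearMap.finrank_range_add_finrank_ker Φ'
    have hrle : finrank ℝ (LinearMap.range Φ') ≤ finrank ℝ ((Submodule.span ℝ ({p} : Set E))ᗮ) :=
      Submodule.finrank_le _
    rw [hdom] at hrn
    have hcardS : finrank ℝ E < S.card := hle
    omega
  -- w restricted to S is in the kernel
  have hw₀mem : (fun i : {i // i ∈ S} => w i.1) ∈ LinearMap.ker Φ' := by
    rw [hkerΦ', hΦ]
    have h1 : ∑ i : {i // i ∈ S}, w i.1 • (t i.1 - p)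
        = (∑ i ∈ S, w i • t i) - (∑ i ∈ S, w i) • p := by
      rw [← Finset.sum_coe_sort S (fun i => w i • t i), ← Finset.sum_coe_sort S w]
      simp [smul_sub, Finset.sum_sub_distrib, Finset.sum_smul]
    rw [h1, hsum1, hsum2, one_smul, sub_self]
  -- find an element of the kernel not in the span of w₀
  have hnotle : ¬ (LinearMap.ker Φ' ≤ Submodule.span ℝ {(fun i : {i // i ∈ S} => w i.1)}) := by
    intro hsub
    have h1 := Submodule.finrank_mono hsub
    have h2 : finrank ℝ (Submodule.span ℝ {(fun i : {i // i ∈ S} => w i.1)}) ≤ 1 :=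
      by simpa using finrank_span_le_card ({(fun i : {i // i ∈ S} => w i.1)} : Set _)
    omega
  obtain ⟨μ, hμker, hμspan⟩ := SetLike.not_le_iff_exists.1 hnotle
  clear hnotle
  set w₀ : {i // i ∈ S} → ℝ := fun i => w i.1 with hw₀def
  set m : ℝ := ∑ i, μ i with hmdef
  set ν : {i // i ∈ S} → ℝ := μ - m • w₀ with hνdef
  have hνker : ν ∈ LinearMap.ker Φ' := sub_mem hμker (Submodule.smul_mem _ m hw₀mem)
  have hw₀sum : ∑ i, w₀ i = 1 := by
    rw [hw₀def]
    rw [Finset.sum_coe_sort S w]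
    exact hsum1
  have hνsum : ∑ i, ν i = 0 := by
    simp only [hνdef, Pi.sub_apply, Pi.smul_apply, smul_eq_mul, Finset.sum_sub_distrib,
      ← Finset.mul_sum, hw₀sum, mul_one, ← hmdef, sub_self]
  have hνne : ν ≠ 0 := by
    intro h
    apply hμspan
    have h2 : μ = m • w₀ := by
      rw [hνdef] at h
      exact sub_eq_zero.1 h
    rw [h2]
    exact Submodule.smul_mem _ m (Submodule.mem_span_singleton_self _)
  have hνneg : ∃ i, ν i < 0 := by
    by_contra hcon
    push_neg at hcon
    apply hνne
    funext i
    exact le_antisymm (by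
      have := (Finset.sum_eq_zero_iff_of_nonneg (fun i _ => hcon i)).1 hνsum i (Finset.mem_univ i)
      exact le_of_eq this) (hcon i)
  -- choose the index to remove
  obtain ⟨i₀, hi₀T, hi₀min⟩ := Finset.exists_min_image
    (Finset.univ.filter (fun i => ν i < 0)) (fun i => w i.1 / (-ν i))
    (by obtain ⟨i, hi⟩ := hνneg; exact ⟨i, Finset.mem_filter.2 ⟨Finset.mem_univ i, hi⟩⟩)
  have hνi₀ : ν i₀ < 0 := (Finset.mem_filter.1 hi₀T).2
  set r : ℝ := w i₀.1 / (-ν i₀) with hrdef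
  have hwi₀pos : 0 < w i₀.1 := lt_of_le_of_ne (hw0 _) (Ne.symm ((hmemS _).1 i₀.2))
  have hrpos : 0 < r := div_pos hwi₀pos (by linarith)
  -- new weights
  set w' : ι → ℝ := fun i => if h : i ∈ S then w i + r * ν ⟨i, h⟩ else 0 with hw'def
  have hw'S : ∀ (i : {i // i ∈ S}), w' i.1 = w i.1 + r * ν i := by
    intro i
    rw [hw'def]
    simp only [i.2, dif_pos]
  have hw'zero : ∀ i ∉ S, w' i = 0 := by
    intro i h; rw [hw'def]; simp only [h, dif_neg, not_false_iff]
  have hw'0 : ∀ i, 0 ≤ w' i := by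
    intro i
    by_cases h : i ∈ S
    · have hEq : w' i = w i + r * ν ⟨i, h⟩ := hw'S ⟨i, h⟩
      rw [hEq]
      rcases le_or_gt 0 (ν ⟨i, h⟩) with hν | hν
      · exact add_nonneg (hw0 i) (mul_nonneg hrpos.le hν)
      · have hmem : (⟨i, h⟩ : {i // i ∈ S}) ∈ Finset.univ.filter (fun i => ν i < 0) :=
          Finset.mem_filter.2 ⟨Finset.mem_univ _, hν⟩
        have hle2 : r ≤ w i / (-ν ⟨i, h⟩) := hi₀min _ hmem
        have hpos : (0:ℝ) < -ν ⟨i, h⟩ := by linarith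
        have h2 : r * (-ν ⟨i, h⟩) ≤ w i := (le_div_iff₀ hpos).1 hle2
        linarith
    · rw [hw'zero i h]
  have hw'i₀ : w' i₀.1 = 0 := by
    have h1 : -ν i₀ ≠ 0 := ne_of_gt (by linarith)
    have h2 : r * ν i₀ = -(w i₀.1) := by
      rw [hrdef]
      field_simp
      rw [div_self hνi₀.ne]
    rw [hw'S i₀, h2]
    ring
  have hw'sum : ∑ i, w' i = 1 := by
    rw [← Finset.sum_subset (Finset.subset_univ S) (fun i _ hi => hw'zero i hi)]
    rw [← Finset.sum_coe_sort S w']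
    calc ∑ i : {i // i ∈ S}, w' i.1 = ∑ i : {i // i ∈ S}, (w i.1 + r * ν i) := by
          exact Finset.sum_congr rfl (fun i _ => hw'S i)
      _ = 1 := by
          rw [Finset.sum_add_distrib, ← Finset.mul_sum, hνsum, Finset.sum_coe_sort S w, hsum1]
          ring
  have hΦν : ∑ i : {i // i ∈ S}, ν i • (t i.1 - p) = 0 := by
    have := (hkerΦ' ν).1 hνker
    rwa [hΦ] at this
  have hνt : ∑ i : {i // i ∈ S}, ν i • t i.1 = 0 := by
    have h1 : ∑ i : {i // i ∈ S}, ν i • (t i.1 - p)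
        = (∑ i : {i // i ∈ S}, ν i • t i.1) - (∑ i : {i // i ∈ S}, ν i) • p := by
      simp [smul_sub, Finset.sum_sub_distrib, Finset.sum_smul]
    rw [h1, hνsum, zero_smul, sub_zero] at hΦν
    exact hΦν
  have hw'pt : ∑ i, w' i • t i = p := by
    rw [← Finset.sum_subset (Finset.subset_univ S)
      (fun i _ hi => by rw [hw'zero i hi, zero_smul])]
    rw [← Finset.sum_coe_sort S (fun i => w' i • t i)]
    calc ∑ i : {i // i ∈ S}, w' i.1 • t i.1
        = ∑ i : {i // i ∈ S}, (w i.1 • t i.1 + r • (ν i • t i.1)) := by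
          refine Finset.sum_congr rfl (fun i _ => ?_)
          rw [hw'S i, add_smul, smul_smul]
      _ = p := by
          rw [Finset.sum_add_distrib, ← Finset.smul_sum, hνt, smul_zero, add_zero,
            Finset.sum_coe_sort S (fun i => w i • t i), hsum2]
  -- support strictly decreased
  have hsupp : Finset.univ.filter (fun i => w' i ≠ 0) ⊆ S.erase i₀.1 := by
    intro i hi
    have hne : w' i ≠ 0 := (Finset.mem_filter.1 hi).2
    have hiS : i ∈ S := by
      by_contra h
      exact hne (hw'zero i h)
    refine Finset.mem_erase.2 ⟨?_, hiS⟩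
    intro hcon
    apply hne
    have : (⟨i, hiS⟩ : {i // i ∈ S}) = i₀ := Subtype.ext hcon
    calc w' i = w' i₀.1 := by rw [← hcon]
      _ = 0 := hw'i₀
  have hcard' : (Finset.univ.filter (fun i => w' i ≠ 0)).card < n := by
    calc (Finset.univ.filter (fun i => w' i ≠ 0)).card ≤ (S.erase i₀.1).card :=
          Finset.card_le_card hsupp
      _ < S.card := Finset.card_erase_lt_of_mem (by exact i₀.2)
      _ = n := hcard
  exact IH _ hcard' w' rfl hw'0 hw'sum hw'pt

set_option maxHeartbeats 1000000 in
/-- **Colorful Carathéodory** (weighted version): given `card ι + 1` color classes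
in `EuclideanSpace ℝ ι`, each of `q` points and each containing `0` in its convex hull,
one can pick one point per class so that `0` is a convex combination of the picks. -/
lemma tv_colorful {ι : Type*} [Fintype ι] {N q : ℕ} (hN : N = Fintype.card ι + 1)
    (f : Fin N → Fin q → EuclideanSpace ℝ ι)
    (hf : ∀ i, (0 : EuclideanSpace ℝ ι) ∈ convexHull ℝ (Set.range (f i))) :
    ∃ (g : Fin N → Fin q) (w : Fin N → ℝ),
      (∀ i, 0 ≤ w i) ∧ ∑ i, w i = 1 ∧ ∑ i, w i • f i (g i) = 0 := by
  classical
  have hNpos : 0 < N := by omega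
  rcases Nat.eq_zero_or_pos q with hq | hq
  · subst hq
    exfalso
    have := hf ⟨0, hNpos⟩
    rw [Set.range_eq_empty, convexHull_empty] at this
    exact this
  have : Nonempty (Fin q) := ⟨⟨0, hq⟩⟩
  -- the convex hull associated to a transversal
  let K : (Fin N → Fin q) → Set (EuclideanSpace ℝ ι) := fun g => convexHull ℝ (Set.range (fun i => f i (g i)))
  have hKconv : ∀ g, Convex ℝ (K g) := fun g => convex_convexHull ℝ _
  have hKne : ∀ g, (K g).Nonempty := fun g =>
    ⟨f ⟨0, hNpos⟩ (g ⟨0, hNpos⟩), subset_convexHull ℝ _ ⟨⟨0, hNpos⟩, rfl⟩⟩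
  have hKcomplete : ∀ g, IsComplete (K g) := fun g =>
    ((Set.finite_range _).isCompact_convexHull ℝ).isComplete
  -- nearest point to 0 in each K g
  have hproj : ∀ g, ∃ v ∈ K g, ‖(0:EuclideanSpace ℝ ι) - v‖ = ⨅ w : K g, ‖(0:EuclideanSpace ℝ ι) - w‖ := fun g =>
    exists_norm_eq_iInf_of_complete_convex (hKne g) (hKcomplete g) (hKconv g) 0
  let P : (Fin N → Fin q) → EuclideanSpace ℝ ι := fun g => (hproj g).choose
  have hPmem : ∀ g, P g ∈ K g := fun g => (hproj g).choose_spec.1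
  have hPinf : ∀ g, ‖(0:EuclideanSpace ℝ ι) - P g‖ = ⨅ w : K g, ‖(0:EuclideanSpace ℝ ι) - w‖ := fun g => (hproj g).choose_spec.2
  have hPle : ∀ g, ∀ u ∈ K g, ‖P g‖ ≤ ‖u‖ := by
    intro g u hu
    have h1 : (⨅ w : K g, ‖(0:EuclideanSpace ℝ ι) - w‖) ≤ ‖(0:EuclideanSpace ℝ ι) - u‖ := by
      apply ciInf_le _ (⟨u, hu⟩ : K g)
      exact ⟨0, Set.forall_mem_range.2 fun _ => norm_nonneg _⟩
    have h2 := hPinf g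
    simp only [zero_sub, norm_neg] at h1 h2
    rw [h2]; exact h1
  -- pick a transversal minimizing the distance to 0
  obtain ⟨g, -, hgmin⟩ := Finset.exists_min_image (Finset.univ : Finset (Fin N → Fin q))
    (fun g => ‖P g‖) ⟨fun _ => ⟨0, hq⟩, Finset.mem_univ _⟩
  by_cases hP0 : P g = 0
  · -- distance 0 : extract the weights
    have h0 : (0:EuclideanSpace ℝ ι) ∈ K g := hP0 ▸ hPmem g
    obtain ⟨w, hw0, hw1, hw2⟩ := tv_exists_weights h0
    exact ⟨g, w, hw0, hw1, hw2⟩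
  · -- otherwise derive a contradiction
    exfalso
    set p : EuclideanSpace ℝ ι := P g with hpdef
    have hppos : (0:ℝ) < ‖p‖ ^ 2 := pow_pos (norm_pos_iff.2 hP0) 2
    -- every point of K g has inner product with p at least ‖p‖²
    have hKineq : ∀ u ∈ K g, ‖p‖ ^ 2 ≤ (inner ℝ p u : ℝ) := by
      intro u hu
      have := (norm_eq_iInf_iff_real_inner_le_zero (hKconv g) (hPmem g)).1 (hPinf g) u hu
      have hexp : (inner ℝ ((0:EuclideanSpace ℝ ι) - p) (u - p) : ℝ) = -(inner ℝ p u) + ‖p‖ ^ 2 := by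
        rw [zero_sub, inner_neg_left, inner_sub_right, real_inner_self_eq_norm_sq]
        ring
      rw [hexp] at this
      linarith
    -- shrink the support of the convex combination representing p
    obtain ⟨w, hw0, hw1, hw2⟩ := tv_exists_weights (hPmem g)
    obtain ⟨w', hw'0, hw'1, hw'2, hw'card⟩ := tv_shrink hP0 (fun i => f i (g i))
      (fun i => hKineq _ (subset_convexHull ℝ _ (Set.mem_range_self i))) _ w rfl hw0 hw1 hw2
    -- find a free color
    have hcard : (Finset.univ.filter (fun i => w' i ≠ 0)).card < N := by
      have := hw'card
      rw [finrank_euclideanSpace] at this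
      omega
    obtain ⟨i₀, hi₀⟩ : ∃ i₀, w' i₀ = 0 := by
      by_contra hcon
      push_neg at hcon
      have : (Finset.univ.filter (fun i => w' i ≠ 0)) = Finset.univ := by
        apply Finset.eq_univ_of_forall
        intro i; exact Finset.mem_filter.2 ⟨Finset.mem_univ i, hcon i⟩
      rw [this, Finset.card_univ, Fintype.card_fin] at hcard
      omega
    -- p is in the hull of the other colors' points
    have hpmem' : p ∈ convexHull ℝ ((fun i => f i (g i)) '' {i | i ≠ i₀}) := by
      have := Finset.centerMass_mem_convexHull (Finset.univ.erase i₀)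
        (w := w') (z := fun i => f i (g i)) (fun i _ => hw'0 i)
        (by rw [Finset.sum_erase _ hi₀, hw'1]; norm_num)
        (fun i hi => Set.mem_image_of_mem _ (show i ∈ {i | i ≠ i₀} from (Finset.mem_erase.1 hi).1))
      rwa [Finset.centerMass, Finset.sum_erase _ hi₀, hw'1, inv_one, one_smul,
        Finset.sum_erase _ (by rw [hi₀, zero_smul]), hw'2] at this
    -- find a point of color i₀ on the other side
    obtain ⟨j', hj'⟩ : ∃ j', (inner ℝ p (f i₀ j') : ℝ) ≤ 0 := by
      by_contra hcon
      push_neg at hcon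
      obtain ⟨μ, hμ0, hμ1, hμ2⟩ := tv_exists_weights (hf i₀)
      have h0 : (inner ℝ p (∑ j, μ j • f i₀ j) : ℝ) = 0 := by rw [hμ2, inner_zero_right]
      rw [inner_sum] at h0
      simp only [real_inner_smul_right] at h0
      have : (0:ℝ) < ∑ j, μ j * (inner ℝ p (f i₀ j) : ℝ) := by
        apply Finset.sum_pos'
        · exact fun j _ => mul_nonneg (hμ0 j) (hcon j).le
        · obtain ⟨j, hj⟩ : ∃ j, 0 < μ j := by
            by_contra hcon2
            push_neg at hcon2
            have : ∑ j, μ j = 0 := le_antisymm (Finset.sum_nonpos (fun j _ => hcon2 j))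
              (Finset.sum_nonneg (fun j _ => hμ0 j))
            rw [hμ1] at this; norm_num at this
          exact ⟨j, Finset.mem_univ j, mul_pos hj (hcon j)⟩
      rw [h0] at this; exact lt_irrefl 0 this
    set c : EuclideanSpace ℝ ι := f i₀ j' with hcdef
    -- the updated transversal
    set g' : Fin N → Fin q := Function.update g i₀ j' with hg'def
    have hpK' : p ∈ K g' := by
      refine convexHull_mono ?_ hpmem'
      rintro u ⟨i, hi, rfl⟩
      refine ⟨i, ?_⟩
      show f i (g' i) = f i (g i)
      rw [hg'def, Function.update_of_ne (show i ≠ i₀ from hi)]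
    have hcK' : c ∈ K g' := subset_convexHull ℝ _
      ⟨i₀, show f i₀ (g' i₀) = c by rw [hg'def, Function.update_self, hcdef]⟩
    -- a strictly closer point on the segment [p, c]
    have hb0 : c - p ≠ 0 := by
      intro h
      have : c = p := by rwa [sub_eq_zero] at h
      rw [this] at hj'
      rw [real_inner_self_eq_norm_sq] at hj'
      linarith
    have hbpos : (0:ℝ) < ‖c - p‖ ^ 2 := pow_pos (norm_pos_iff.2 hb0) 2
    set s : ℝ := min 1 (‖p‖ ^ 2 / ‖c - p‖ ^ 2) with hsdef
    have hs0 : 0 < s := lt_min one_pos (div_pos hppos hbpos)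
    have hs1 : s ≤ 1 := min_le_left _ _
    set u : EuclideanSpace ℝ ι := p + s • (c - p) with hudef
    have huK' : u ∈ K g' := by
      have := (hKconv g') hpK' hcK' (a := 1 - s) (b := s) (by linarith) hs0.le (by ring)
      have heq : (1 - s) • p + s • c = p + s • (c - p) := by
        rw [smul_sub, sub_smul, one_smul]
        abel
      rwa [heq] at this
    have hunorm : ‖u‖ < ‖p‖ := by
      have hexp : ‖u‖ ^ 2 = ‖p‖ ^ 2 + 2 * (s * ((inner ℝ p c : ℝ) - ‖p‖ ^ 2))
          + s ^ 2 * ‖c - p‖ ^ 2 := by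
        rw [hudef, norm_add_sq_real, real_inner_smul_right, inner_sub_right,
          real_inner_self_eq_norm_sq, norm_smul, mul_pow, Real.norm_eq_abs, abs_of_pos hs0]
        try ring
      have h1 : s * ((inner ℝ p c : ℝ) - ‖p‖ ^ 2) ≤ -(s * ‖p‖ ^ 2) := by
        have : (inner ℝ p c : ℝ) - ‖p‖ ^ 2 ≤ -(‖p‖ ^ 2) := by linarith
        nlinarith
      have h2 : s ^ 2 * ‖c - p‖ ^ 2 ≤ s * ‖p‖ ^ 2 := by
        have hs' : s ≤ ‖p‖ ^ 2 / ‖c - p‖ ^ 2 := min_le_right _ _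
        have := (le_div_iff₀ hbpos).1 hs'
        nlinarith
      have hlt : ‖u‖ ^ 2 < ‖p‖ ^ 2 := by nlinarith
      exact lt_of_pow_lt_pow_left₀ 2 (norm_nonneg p) hlt
    have := hPle g' u huK'
    have := hgmin g' (Finset.mem_univ g')
    linarith

set_option maxHeartbeats 1000000 in
/-- **Tverberg's theorem.** Any `(d+1)(q-1)+1` points in `ℝ^d` can be partitioned
into `q` pairwise disjoint nonempty sets whose convex hulls have a common point. -/
theorem tverberg (d q : ℕ) (hd : 1 ≤ d) (hq : 1 ≤ q)
    (x : Fin ((d+1)*(q-1)+1) → EuclideanSpace ℝ (Fin d)) :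
    ∃ A : Fin q → Set (Fin ((d+1)*(q-1)+1)),
      (∀ i, (A i).Nonempty) ∧
      (∀ i j, i ≠ j → Disjoint (A i) (A j)) ∧
      (⋃ i, A i) = Set.univ ∧
      (⋂ i, convexHull ℝ (x '' A i)).Nonempty := by
  classical
  have hcard : (d+1)*(q-1)+1 = Fintype.card (Fin (d+1) × Fin (q-1)) + 1 := by
    simp
  -- the lifted points in ℝ^{d+1}
  set y : Fin ((d+1)*(q-1)+1) → Fin (d+1) → ℝ := fun i => Fin.snoc (x i) 1 with hydef
  -- the auxiliary vectors v j in ℝ^{q-1} with ∑ v j = 0, any q-1 of them independent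
  set v : Fin q → Fin (q-1) → ℝ :=
    fun j k => (if (j:ℕ) = (k:ℕ) then 1 else 0) + (if (j:ℕ) = q-1 then -1 else 0) with hvdef
  have hsum_ite : ∀ (m : ℕ) (hm : m < q) (fc : Fin q → ℝ),
      ∑ j : Fin q, (if (j:ℕ) = m then fc j else 0) = fc ⟨m, hm⟩ := by
    intro m hm fc
    rw [Finset.sum_eq_single (⟨m, hm⟩ : Fin q)]
    · simp
    · intro j _ hj
      rw [if_neg (fun h => hj (Fin.ext h))]
    · intro h; exact absurd (Finset.mem_univ _) h
  set jl : Fin q := ⟨q-1, by omega⟩ with hjldef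
  have hv1 : ∀ k : Fin (q-1), ∑ j, v j k = 0 := by
    intro k
    have hk : (k:ℕ) < q := by omega
    simp only [hvdef]
    rw [Finset.sum_add_distrib, hsum_ite _ hk (fun _ => 1),
      hsum_ite (q-1) (by omega) (fun _ => -1)]
    ring
  have hv2 : ∀ (c : Fin q → ℝ), (∀ k : Fin (q-1), ∑ j, c j * v j k = 0) →
      ∀ j, c j = c jl := by
    intro c hc j
    rcases Nat.lt_or_ge (j:ℕ) (q-1) with hjlt | hjge
    · have hthis := hc ⟨(j:ℕ), hjlt⟩
      have hrw : ∀ j' : Fin q, c j' * v j' ⟨(j:ℕ), hjlt⟩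
          = (if (j':ℕ) = (j:ℕ) then c j' else 0) + (if (j':ℕ) = q-1 then -(c j') else 0) := by
        intro j'
        simp only [hvdef]
        split_ifs <;> ring
      rw [Finset.sum_congr rfl (fun j' _ => hrw j'), Finset.sum_add_distrib,
        hsum_ite _ (by omega) c, hsum_ite (q-1) (by omega) (fun j' => -(c j'))] at hthis
      rw [Fin.eta] at hthis
      have hgoal : c j = c ⟨q-1, by omega⟩ := by linarith
      exact hgoal
    · have hj : j = jl := Fin.ext (by simp [hjldef]; omega)
      rw [hj]
  -- the tensor points
  set f : Fin ((d+1)*(q-1)+1) → Fin q → EuclideanSpace ℝ (Fin (d+1) × Fin (q-1)) :=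
    fun i j => WithLp.toLp 2 (fun ab => y i ab.1 * v j ab.2) with hfdef
  have hf : ∀ i, (0 : EuclideanSpace ℝ (Fin (d+1) × Fin (q-1)))
      ∈ convexHull ℝ (Set.range (f i)) := by
    intro i
    have h0 : ∑ j : Fin q, (q:ℝ)⁻¹ • f i j = 0 := by
      ext ab
      rw [WithLp.ofLp_sum, Finset.sum_apply]
      simp only [PiLp.smul_apply, smul_eq_mul, hfdef, WithLp.ofLp_toLp]
      rw [← Finset.mul_sum, show ∑ j : Fin q, y i ab.1 * v j ab.2
        = y i ab.1 * ∑ j : Fin q, v j ab.2 from (Finset.mul_sum _ _ _).symm, hv1 ab.2]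
      simp
    have hwsum : ∑ _j : Fin q, (q:ℝ)⁻¹ = 1 := by
      rw [Finset.sum_const, Finset.card_univ, Fintype.card_fin, nsmul_eq_mul]
      have : (q:ℝ) ≠ 0 := by positivity
      field_simp
    have hmem := Finset.centerMass_mem_convexHull (Finset.univ : Finset (Fin q))
      (w := fun _ => (q:ℝ)⁻¹) (z := f i) (fun _ _ => by positivity)
      (by rw [hwsum]; norm_num) (fun j _ => Set.mem_range_self j)
    rwa [Finset.centerMass, hwsum, inv_one, one_smul, h0] at hmem
  -- apply colorful Carathéodory
  obtain ⟨g, w, hw0, hw1, hw2⟩ := tv_colorful hcard f hf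
  -- the partition
  set A : Fin q → Set (Fin ((d+1)*(q-1)+1)) := fun j => {i | g i = j} with hAdef
  set z : Fin q → Fin (d+1) → ℝ :=
    fun j a => ∑ i ∈ Finset.univ.filter (fun i => g i = j), w i * y i a with hzdef
  -- the tensor identity, fiberwise
  have hkey : ∀ (a : Fin (d+1)) (b : Fin (q-1)), ∑ j : Fin q, z j a * v j b = 0 := by
    intro a b
    have h1 : (∑ i, w i • f i (g i)) (a, b)
        = (0 : EuclideanSpace ℝ (Fin (d+1) × Fin (q-1))) (a, b) := by rw [hw2]
    rw [WithLp.ofLp_sum, Finset.sum_apply] at h1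
    simp only [PiLp.smul_apply, smul_eq_mul, hfdef, WithLp.ofLp_toLp] at h1
    rw [← Finset.sum_fiberwise Finset.univ g
      (fun i => w i * (y i a * v (g i) b))] at h1
    have h2 : ∀ j : Fin q, ∑ i ∈ Finset.univ.filter (fun i => g i = j),
        w i * (y i a * v (g i) b) = z j a * v j b := by
      intro j
      rw [Finset.sum_congr rfl (fun i hi => by rw [(Finset.mem_filter.1 hi).2]), hzdef,
        Finset.sum_mul]
      exact Finset.sum_congr rfl (fun i _ => by ring)
    rw [Finset.sum_congr rfl (fun j _ => h2 j)] at h1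
    simpa using h1
  -- all the fiberwise sums z j agree
  have hconst : ∀ (j : Fin q) (a : Fin (d+1)), z j a = z jl a := by
    intro j a
    exact hv2 (fun j => z j a) (fun k => hkey a k) j
  -- the common value of the weights of each part is 1/q
  have hlastcoord : ∀ j : Fin q, z j (Fin.last d)
      = ∑ i ∈ Finset.univ.filter (fun i => g i = j), w i := by
    intro j
    rw [hzdef]
    refine Finset.sum_congr rfl (fun i _ => ?_)
    rw [hydef]
    simp [Fin.snoc_last]
  have hsigma : ∀ j : Fin q, ∑ i ∈ Finset.univ.filter (fun i => g i = j), w i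
      = z jl (Fin.last d) := by
    intro j
    rw [← hlastcoord j, hconst j]
  have hqsigma : (q:ℝ) * z jl (Fin.last d) = 1 := by
    have := Finset.sum_fiberwise Finset.univ g w
    rw [hw1] at this
    rw [Finset.sum_congr rfl (fun j _ => hsigma j)] at this
    rw [Finset.sum_const, Finset.card_univ, Fintype.card_fin, nsmul_eq_mul] at this
    exact this
  have hsigpos : 0 < z jl (Fin.last d) := by
    have hqpos : (0:ℝ) < q := by positivity
    nlinarith
  -- nonemptiness of the parts
  have hne : ∀ j, (A j).Nonempty := by
    intro j
    have h1 := hsigma j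
    by_contra hcon
    rw [Set.not_nonempty_iff_eq_empty] at hcon
    have hempty : Finset.univ.filter (fun i => g i = j) = ∅ := by
      rw [Finset.filter_eq_empty_iff]
      intro i _
      intro h
      have : i ∈ A j := h
      rw [hcon] at this
      exact this
    rw [hempty, Finset.sum_empty] at h1
    linarith
  -- the common point
  set c0 : EuclideanSpace ℝ (Fin d) :=
    WithLp.toLp 2 (fun a => (q:ℝ) * z jl (Fin.castSucc a)) with hc0def
  have hc0mem : ∀ j : Fin q, c0 ∈ convexHull ℝ (x '' A j) := by
    intro j
    have hwsum : ∑ i ∈ Finset.univ.filter (fun i => g i = j), (q:ℝ) * w i = 1 := by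
      rw [← Finset.mul_sum, hsigma j, hqsigma]
    have hmem := Finset.centerMass_mem_convexHull
      (Finset.univ.filter (fun i => g i = j))
      (w := fun i => (q:ℝ) * w i) (z := x)
      (fun i _ => mul_nonneg (by positivity) (hw0 i))
      (by rw [hwsum]; norm_num)
      (fun i hi => Set.mem_image_of_mem x
        (show i ∈ A j from (Finset.mem_filter.1 hi).2))
    rw [Finset.centerMass, hwsum, inv_one, one_smul] at hmem
    have heq : ∑ i ∈ Finset.univ.filter (fun i => g i = j), ((q:ℝ) * w i) • x i = c0 := by
      ext a
      rw [WithLp.ofLp_sum, Finset.sum_apply]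
      simp only [PiLp.smul_apply, smul_eq_mul]
      have hxy : ∀ i, x i a = y i (Fin.castSucc a) := by
        intro i
        rw [hydef]
        simp [Fin.snoc_castSucc]
      rw [Finset.sum_congr rfl (fun i _ => by rw [hxy i]), hc0def]
      show ∑ i ∈ _, (q:ℝ) * w i * y i (Fin.castSucc a) = (q:ℝ) * z jl (Fin.castSucc a)
      rw [← hconst j (Fin.castSucc a), hzdef, Finset.mul_sum]
      exact Finset.sum_congr rfl (fun i _ => by ring)
    rwa [heq] at hmem
  refine ⟨A, hne, ?_, ?_, ⟨c0, Set.mem_iInter.2 hc0mem⟩⟩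
  · intro i j hij
    rw [Set.disjoint_left]
    intro a hai haj
    exact hij ((hai : g a = i).symm.trans (haj : g a = j))
  · rw [Set.eq_univ_iff_forall]
    intro i
    exact Set.mem_iUnion.2 ⟨g i, rfl⟩
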